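/- Let G be a countably infinite graph such that for every finite set F ⊆ V(G) there exists a vertex v ∉ F with no neighbor in F (i.e., G is 0-ruled), and let H be a graph such that for every finite set W ⊆ V(H) the set of common neighbors of W in H is infinite. Then there is an embedding of G into H whose image is all of V(H). -/

import Mathlib

namespace Stmt7Aux
variable {V W : Type*} [Infinite V] [Infinite W]
variable (G : SimpleGraph V) (H : SimpleGraph W) (eV : ℕ ≃ V) (eW : ℕ ≃ W)

def Spec (n : ℕ) (L : List (V × W)) (p : V × W) : Prop :=
  p.1 ∉ L.map Prod.fst ∧ p.2 ∉ L.map Prod.snd ∧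
  (∀ q ∈ L, G.Adj p.1 q.1 → H.Adj p.2 q.2) ∧
  (Even n → ∃ m, p.1 = eV m ∧ ∀ k < m, eV k ∈ L.map Prod.fst) ∧
  (¬ Even n → ∃ m, p.2 = eW m ∧ ∀ k < m, eW k ∈ L.map Prod.snd)

theorem spec_exists
    (hG : ∀ F : Set V, F.Finite → ∃ v ∉ F, ∀ u ∈ F, ¬ G.Adj v u)
    (hH : ∀ F : Set W, F.Finite → {w : W | ∀ u ∈ F, H.Adj w u}.Infinite)
    (n : ℕ) (L : List (V × W)) : ∃ p, Spec G H eV eW n L p := by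
  classical
  by_cases hn : Even n
  · have hxv : ∃ m, eV m ∉ L.map Prod.fst := by
      obtain ⟨v, hv⟩ := (L.map Prod.fst).finite_toSet.infinite_compl.nonempty
      exact ⟨eV.symm v, by simpa using hv⟩
    have hw := (hH {u | u ∈ L.map Prod.snd} (L.map Prod.snd).finite_toSet).diff
      (L.map Prod.snd).finite_toSet
    obtain ⟨w, hw1, hw2⟩ := hw.nonempty
    refine ⟨(eV (Nat.find hxv), w), Nat.find_spec hxv, by simpa using hw2, ?_, ?_,
      fun h => absurd hn h⟩
    · exact fun q hq _ => hw1 q.2 (List.mem_map_of_mem (f := Prod.snd) hq)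
    · exact fun _ => ⟨Nat.find hxv, rfl, fun k hk => by
        have := Nat.find_min hxv hk; simpa using this⟩
  · have hxw : ∃ m, eW m ∉ L.map Prod.snd := by
      obtain ⟨w, hw⟩ := (L.map Prod.snd).finite_toSet.infinite_compl.nonempty
      exact ⟨eW.symm w, by simpa using hw⟩
    obtain ⟨v, hv1, hv2⟩ := hG {u | u ∈ L.map Prod.fst} (L.map Prod.fst).finite_toSet
    refine ⟨(v, eW (Nat.find hxw)), by simpa using hv1, Nat.find_spec hxw, ?_,
      fun h => absurd h hn, ?_⟩
    · exact fun q hq hadj => absurd hadj (hv2 q.1 (List.mem_map_of_mem (f := Prod.fst) hq))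
    · exact fun _ => ⟨Nat.find hxw, rfl, fun k hk => by
        have := Nat.find_min hxw hk; simpa using this⟩


variable (hG : ∀ F : Set V, F.Finite → ∃ v ∉ F, ∀ u ∈ F, ¬ G.Adj v u)
variable (hH : ∀ F : Set W, F.Finite → {w : W | ∀ u ∈ F, H.Adj w u}.Infinite)

noncomputable def chain : ℕ → List (V × W)
  | 0 => []
  | n+1 => chain n ++ [Classical.choose (spec_exists G H eV eW hG hH n (chain n))]

noncomputable def pair (n : ℕ) : V × W :=
  Classical.choose (spec_exists G H eV eW hG hH n (chain G H eV eW hG hH n))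

theorem chain_succ (n : ℕ) :
    chain G H eV eW hG hH (n+1) = chain G H eV eW hG hH n ++ [pair G H eV eW hG hH n] := rfl

theorem pair_spec (n : ℕ) :
    Spec G H eV eW n (chain G H eV eW hG hH n) (pair G H eV eW hG hH n) :=
  Classical.choose_spec _

theorem mem_chain {q : V × W} {n : ℕ} :
    q ∈ chain G H eV eW hG hH n ↔ ∃ i < n, pair G H eV eW hG hH i = q := by
  induction n with
  | zero => simp [chain]
  | succ n ih =>
    rw [chain_succ]
    simp only [List.mem_append, List.mem_singleton, ih]
    constructor
    · rintro (⟨i, hi, rfl⟩ | rfl)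
      · exact ⟨i, Nat.lt_succ_of_lt hi, rfl⟩
      · exact ⟨n, Nat.lt_succ_self n, rfl⟩
    · rintro ⟨i, hi, rfl⟩
      rcases Nat.lt_succ_iff_lt_or_eq.mp hi with h | rfl
      · exact Or.inl ⟨i, h, rfl⟩
      · exact Or.inr rfl

theorem mem_chain_fst {v : V} {n : ℕ} :
    v ∈ (chain G H eV eW hG hH n).map Prod.fst ↔
      ∃ i < n, (pair G H eV eW hG hH i).1 = v := by
  simp only [List.mem_map]
  constructor
  · rintro ⟨q, hq, rfl⟩
    obtain ⟨i, hi, rfl⟩ := (mem_chain G H eV eW hG hH).mp hq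
    exact ⟨i, hi, rfl⟩
  · rintro ⟨i, hi, rfl⟩
    exact ⟨_, (mem_chain G H eV eW hG hH).mpr ⟨i, hi, rfl⟩, rfl⟩

theorem mem_chain_snd {w : W} {n : ℕ} :
    w ∈ (chain G H eV eW hG hH n).map Prod.snd ↔
      ∃ i < n, (pair G H eV eW hG hH i).2 = w := by
  simp only [List.mem_map]
  constructor
  · rintro ⟨q, hq, rfl⟩
    obtain ⟨i, hi, rfl⟩ := (mem_chain G H eV eW hG hH).mp hq
    exact ⟨i, hi, rfl⟩
  · rintro ⟨i, hi, rfl⟩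
    exact ⟨_, (mem_chain G H eV eW hG hH).mpr ⟨i, hi, rfl⟩, rfl⟩


theorem adj_pair {i j : ℕ} (hij : i < j)
    (h : G.Adj (pair G H eV eW hG hH j).1 (pair G H eV eW hG hH i).1) :
    H.Adj (pair G H eV eW hG hH j).2 (pair G H eV eW hG hH i).2 :=
  (pair_spec G H eV eW hG hH j).2.2.1 _
    ((mem_chain G H eV eW hG hH).mpr ⟨i, hij, rfl⟩) h

theorem fst_injective : Function.Injective fun n => (pair G H eV eW hG hH n).1 := by
  intro i j hij
  by_contra hne
  rcases Nat.lt_or_ge i j with h | h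
  · exact (pair_spec G H eV eW hG hH j).1
      ((mem_chain_fst G H eV eW hG hH).mpr ⟨i, h, hij⟩)
  · exact (pair_spec G H eV eW hG hH i).1
      ((mem_chain_fst G H eV eW hG hH).mpr ⟨j, lt_of_le_of_ne h (Ne.symm hne), hij.symm⟩)

theorem snd_injective : Function.Injective fun n => (pair G H eV eW hG hH n).2 := by
  intro i j hij
  by_contra hne
  rcases Nat.lt_or_ge i j with h | h
  · exact (pair_spec G H eV eW hG hH j).2.1
      ((mem_chain_snd G H eV eW hG hH).mpr ⟨i, h, hij⟩)
  · exact (pair_spec G H eV eW hG hH i).2.1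
      ((mem_chain_snd G H eV eW hG hH).mpr ⟨j, lt_of_le_of_ne h (Ne.symm hne), hij.symm⟩)

theorem fst_surjective : Function.Surjective fun n => (pair G H eV eW hG hH n).1 := by
  have key : ∀ m : ℕ, ∃ i, (pair G H eV eW hG hH i).1 = eV m := by
    intro m
    induction m using Nat.strong_induction_on with
    | _ m ih =>
      choose g hg using ih
      classical
      set g' : ℕ → ℕ := fun k => if h : k < m then g k h else 0 with hg'
      set M : ℕ := ((Finset.range m).sup g') + 1 with hM
      set N : ℕ := 2 * M with hN
      have hmemk : ∀ k < m, eV k ∈ (chain G H eV eW hG hH N).map Prod.fst := by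
        intro k hk
        refine (mem_chain_fst G H eV eW hG hH).mpr ⟨g' k, ?_, ?_⟩
        · have h1 : g' k ≤ (Finset.range m).sup g' :=
            Finset.le_sup (Finset.mem_range.mpr hk)
          omega
        · simp only [hg', dif_pos hk]
          exact hg k hk
      obtain ⟨m', hm'1, hm'2⟩ := (pair_spec G H eV eW hG hH N).2.2.2.1 ⟨M, two_mul M⟩
      by_cases hmem : eV m ∈ (chain G H eV eW hG hH N).map Prod.fst
      · obtain ⟨i, _, hi⟩ := (mem_chain_fst G H eV eW hG hH).mp hmem
        exact ⟨i, hi⟩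
      · have h1 : ¬ m < m' := fun h => hmem (hm'2 m h)
        have h2 : ¬ m' < m := fun h =>
          (pair_spec G H eV eW hG hH N).1 (hm'1 ▸ hmemk m' h)
        have hmm : m' = m := by omega
        exact ⟨N, by rw [hm'1, hmm]⟩
  intro v
  obtain ⟨i, hi⟩ := key (eV.symm v)
  exact ⟨i, by simpa using hi⟩


theorem snd_surjective : Function.Surjective fun n => (pair G H eV eW hG hH n).2 := by
  have key : ∀ m : ℕ, ∃ i, (pair G H eV eW hG hH i).2 = eW m := by
    intro m
    induction m using Nat.strong_induction_on with
    | _ m ih =>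
      choose g hg using ih
      classical
      set g' : ℕ → ℕ := fun k => if h : k < m then g k h else 0 with hg'
      set M : ℕ := ((Finset.range m).sup g') + 1 with hM
      set N : ℕ := 2 * M + 1 with hN
      have hmemk : ∀ k < m, eW k ∈ (chain G H eV eW hG hH N).map Prod.snd := by
        intro k hk
        refine (mem_chain_snd G H eV eW hG hH).mpr ⟨g' k, ?_, ?_⟩
        · have h1 : g' k ≤ (Finset.range m).sup g' :=
            Finset.le_sup (Finset.mem_range.mpr hk)
          omega
        · simp only [hg', dif_pos hk]
          exact hg k hk
      have hodd : ¬ Even N := by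
        simp [hN, Nat.even_add_one, parity_simps]
      obtain ⟨m', hm'1, hm'2⟩ := (pair_spec G H eV eW hG hH N).2.2.2.2 hodd
      by_cases hmem : eW m ∈ (chain G H eV eW hG hH N).map Prod.snd
      · obtain ⟨i, _, hi⟩ := (mem_chain_snd G H eV eW hG hH).mp hmem
        exact ⟨i, hi⟩
      · have h1 : ¬ m < m' := fun h => hmem (hm'2 m h)
        have h2 : ¬ m' < m := fun h =>
          (pair_spec G H eV eW hG hH N).2.1 (hm'1 ▸ hmemk m' h)
        have hmm : m' = m := by omega
        exact ⟨N, by rw [hm'1, hmm]⟩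
  intro w
  obtain ⟨i, hi⟩ := key (eW.symm w)
  exact ⟨i, by simpa using hi⟩

end Stmt7Aux


theorem stmt_7 {V W : Type*} [Countable V] [Infinite V] [Countable W] [Infinite W]
    (G : SimpleGraph V) (H : SimpleGraph W)
    (hG : ∀ F : Set V, F.Finite → ∃ v ∉ F, ∀ u ∈ F, ¬ G.Adj v u)
    (hH : ∀ F : Set W, F.Finite → {w : W | ∀ u ∈ F, H.Adj w u}.Infinite) :
    ∃ f : V → W, Function.Injective f ∧ Function.Surjective f ∧
      ∀ u v : V, G.Adj u v → H.Adj (f u) (f v) := by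
  obtain ⟨eV⟩ : Nonempty (ℕ ≃ V) := nonempty_equiv_of_countable
  obtain ⟨eW⟩ : Nonempty (ℕ ≃ W) := nonempty_equiv_of_countable
  set a : ℕ → V := fun n => (Stmt7Aux.pair G H eV eW hG hH n).1 with ha'
  set b : ℕ → W := fun n => (Stmt7Aux.pair G H eV eW hG hH n).2 with hb'
  have ha : Function.Bijective a :=
    ⟨Stmt7Aux.fst_injective G H eV eW hG hH, Stmt7Aux.fst_surjective G H eV eW hG hH⟩
  set ea := Equiv.ofBijective a ha with hea
  refine ⟨fun v => b (ea.symm v), ?_, ?_, ?_⟩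
  · exact (Stmt7Aux.snd_injective G H eV eW hG hH).comp ea.symm.injective
  · exact (Stmt7Aux.snd_surjective G H eV eW hG hH).comp ea.symm.surjective
  · intro u v huv
    have hu : a (ea.symm u) = u := ea.apply_symm_apply u
    have hv : a (ea.symm v) = v := ea.apply_symm_apply v
    set i := ea.symm u with hi
    set j := ea.symm v with hj
    have hne : i ≠ j := by
      intro h
      exact G.ne_of_adj huv (by rw [← hu, ← hv, h])
    rcases Nat.lt_or_ge i j with h | h
    · exact (Stmt7Aux.adj_pair G H eV eW hG hH h
        (by rw [show (Stmt7Aux.pair G H eV eW hG hH j).1 = a j from rfl,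
          show (Stmt7Aux.pair G H eV eW hG hH i).1 = a i from rfl, hu, hv]; exact huv.symm)).symm
    · exact Stmt7Aux.adj_pair G H eV eW hG hH (lt_of_le_of_ne h (Ne.symm hne))
        (by rw [show (Stmt7Aux.pair G H eV eW hG hH j).1 = a j from rfl,
          show (Stmt7Aux.pair G H eV eW hG hH i).1 = a i from rfl, hu, hv]; exact huv)
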